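/- In the symmetric group S_n (type A_{n-1} Weyl group), for 1 ≤ i < j ≤ n, there is an edge w → w·(i,j) in the quantum Bruhat graph if and only if there is no k with i < k < j such that w(i) ≺ w(k) ≺ w(j), where ≺ is the circular order on {1,…,n} starting at w(i). -/

import Mathlib

/-- Coxeter length of a permutation of `Fin n`: the number of inversions. -/
def invLen {n : ℕ} (w : Equiv.Perm (Fin n)) : ℕ :=
  ((Finset.univ : Finset (Fin n × Fin n)).filter (fun p => p.1 < p.2 ∧ w p.2 < w p.1)).card

/-- Position of `b` in the circular (clockwise) order on `Fin n` starting at `a`. -/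
def circDist {n : ℕ} (a b : Fin n) : ℕ := (b.val + n - a.val) % n

/-- Edge `w → w t_{ij}` of the quantum Bruhat graph of `S_n`:
either a Bruhat cover `ℓ(w t_{ij}) = ℓ(w)+1`, or a quantum edge
`ℓ(w t_{ij}) = ℓ(w) - 2(j-i) + 1` (since `⟨ρ, α_{ij}^∨⟩ = j - i`). -/
def qbEdgeA {n : ℕ} (w : Equiv.Perm (Fin n)) (i j : Fin n) : Prop :=
  invLen (w * Equiv.swap i j) = invLen w + 1 ∨
    (invLen (w * Equiv.swap i j) : ℤ) = (invLen w : ℤ) - 2 * ((j : ℤ) - (i : ℤ)) + 1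

open Finset

lemma card_filter_int {α : Type*} [Fintype α] (p : α → Prop) [DecidablePred p] :
    ((univ.filter p).card : ℤ) = ∑ x, (if p x then (1:ℤ) else 0) := by
  rw [Finset.card_filter]; push_cast; rfl

lemma sum_split2 {α : Type*} [Fintype α] [DecidableEq α] (f : α → ℤ) (i j : α) (h : i ≠ j) :
    ∑ x, f x = f i + f j + ∑ x ∈ univ \ {i,j}, f x := by
  rw [← Finset.sum_sdiff (Finset.subset_univ {i,j}), Finset.sum_pair h]; ring

lemma sum_sdiff_to_univ {α : Type*} [Fintype α] [DecidableEq α] (f : α → ℤ) (i j : α)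
    (h0 : f i = 0) (h1 : f j = 0) : ∑ x ∈ univ \ {i,j}, f x = ∑ x, f x := by
  apply Finset.sum_subset (Finset.sdiff_subset)
  intro x _ hx
  simp only [Finset.mem_sdiff, Finset.mem_univ, true_and, not_not, Finset.mem_insert,
    Finset.mem_singleton] at hx
  rcases hx with rfl | rfl <;> assumption

lemma invLen_mul_swap {n : ℕ} (w : Equiv.Perm (Fin n)) (i j : Fin n) :
    invLen (w * Equiv.swap i j) =
      (univ.filter (fun p : Fin n × Fin n =>
        Equiv.swap i j p.1 < Equiv.swap i j p.2 ∧ w p.2 < w p.1)).card := by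
  apply Finset.card_bij' (fun p _ => (Equiv.swap i j p.1, Equiv.swap i j p.2))
    (fun p _ => (Equiv.swap i j p.1, Equiv.swap i j p.2))
  · intro p hp
    replace hp := Finset.mem_filter.mp hp
    simp only [Finset.mem_filter, Finset.mem_univ, true_and, Equiv.Perm.mul_apply] at hp ⊢
    simpa [Equiv.swap_apply_self] using hp
  · intro p hp
    refine Finset.mem_filter.mpr ?_
    simp only [Finset.mem_filter, Finset.mem_univ, true_and, Equiv.Perm.mul_apply] at hp ⊢
    simpa [Equiv.swap_apply_self] using hp
  · intro p hp; simp [Equiv.swap_apply_self]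
  · intro p hp; simp [Equiv.swap_apply_self]

lemma key {n : ℕ} (w : Equiv.Perm (Fin n)) (i j : Fin n) (hij : i < j) (hab : w i < w j) :
    (invLen (w * Equiv.swap i j) : ℤ) = (invLen w : ℤ) + 1 +
      2 * ((univ.filter fun k => i < k ∧ k < j ∧ w i < w k ∧ w k < w j).card : ℤ) := by
  have hne : i ≠ j := ne_of_lt hij
  have hijv : i.val < j.val := hij
  have hwne : ∀ p : Fin n, p ≠ i → (w p).val ≠ (w i).val := fun p hp h =>
    hp (w.injective (Fin.val_injective h))
  have hwne' : ∀ p : Fin n, p ≠ j → (w p).val ≠ (w j).val := fun p hp h =>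
    hp (w.injective (Fin.val_injective h))
  set t := Equiv.swap i j with ht
  have hti : t i = j := Equiv.swap_apply_left i j
  have htj : t j = i := Equiv.swap_apply_right i j
  have htq : ∀ q : Fin n, q ≠ i → q ≠ j → t q = q := fun q h1 h2 =>
    Equiv.swap_apply_of_ne_of_ne h1 h2
  -- the three counting sets
  have h1 : (invLen (w * t) : ℤ) =
      ∑ p : Fin n, ∑ q : Fin n, (if t p < t q ∧ w q < w p then (1:ℤ) else 0) := by
    rw [invLen_mul_swap, card_filter_int, Fintype.sum_prod_type]
  have h2 : (invLen w : ℤ) =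
      ∑ p : Fin n, ∑ q : Fin n, (if p < q ∧ w q < w p then (1:ℤ) else 0) := by
    rw [invLen, card_filter_int, Fintype.sum_prod_type]
  -- difference function
  set d : Fin n → Fin n → ℤ := fun p q =>
    (if t p < t q ∧ w q < w p then (1:ℤ) else 0) - (if p < q ∧ w q < w p then 1 else 0) with hd
  have hdiff : (invLen (w * t) : ℤ) - invLen w = ∑ p : Fin n, ∑ q : Fin n, d p q := by
    rw [h1, h2, ← Finset.sum_sub_distrib]
    exact Finset.sum_congr rfl fun p _ => by rw [← Finset.sum_sub_distrib]
  -- inner sum at p = i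
  have hgi : ∑ q : Fin n, d i q =
      -(((univ.filter fun q => i < q ∧ q < j ∧ w q < w i).card : ℤ)) := by
    rw [sum_split2 _ i j hne]
    have e1 : d i i = 0 := by simp [hd]
    have e2 : d i j = 0 := by
      simp only [hd, hti, htj]
      rw [if_neg, if_neg, sub_zero]
      · exact fun h => absurd h.2 (not_lt.2 (le_of_lt hab))
      · exact fun h => absurd h.1 (not_lt.2 (le_of_lt hij))
    rw [e1, e2, zero_add, zero_add]
    have e3 : ∀ q ∈ univ \ ({i,j} : Finset (Fin n)), d i q =
        -(if i < q ∧ q < j ∧ w q < w i then (1:ℤ) else 0) := by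
      intro q hq
      simp only [Finset.mem_sdiff, Finset.mem_insert, Finset.mem_singleton, not_or] at hq
      obtain ⟨-, hqi, hqj⟩ := hq
      have hqjv : q.val ≠ j.val := fun h => hqj (Fin.val_injective h)
      simp only [hd, hti, htq q hqi hqj, Fin.lt_def]
      split_ifs <;> omega
    rw [Finset.sum_congr rfl e3, Finset.sum_neg_distrib, neg_inj,
      sum_sdiff_to_univ _ i j (by simp) (by simp), card_filter_int]
  -- inner sum at p = j
  have hgj : ∑ q : Fin n, d j q =
      1 + ((univ.filter fun q => i < q ∧ q < j ∧ w q < w j).card : ℤ) := by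
    rw [sum_split2 _ j i hne.symm]
    have e1 : d j j = 0 := by simp [hd]
    have e2 : d j i = 1 := by
      simp only [hd, hti, htj]
      rw [if_pos ⟨hij, hab⟩, if_neg, sub_zero]
      exact fun h => absurd h.1 (not_lt.2 (le_of_lt hij))
    rw [e1, e2, zero_add]
    have e3 : ∀ q ∈ univ \ ({j,i} : Finset (Fin n)), d j q =
        (if i < q ∧ q < j ∧ w q < w j then (1:ℤ) else 0) := by
      intro q hq
      simp only [Finset.mem_sdiff, Finset.mem_insert, Finset.mem_singleton, not_or] at hq
      obtain ⟨-, hqj, hqi⟩ := hq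
      have hqjv : q.val ≠ j.val := fun h => hqj (Fin.val_injective h)
      simp only [hd, hti, htj, htq q hqi hqj, Fin.lt_def]
      split_ifs <;> omega
    rw [Finset.sum_congr rfl e3,
      sum_sdiff_to_univ _ j i (by simp) (by simp), card_filter_int]
  -- inner sum at other p
  have hgp : ∀ p : Fin n, p ≠ i → p ≠ j → ∑ q : Fin n, d p q =
      (if i < p ∧ p < j ∧ w i < w p ∧ w p < w j then (1:ℤ) else 0) := by
    intro p hpi hpj
    rw [sum_split2 _ i j hne]
    have e3 : ∀ q ∈ univ \ ({i,j} : Finset (Fin n)), d p q = 0 := by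
      intro q hq
      simp only [Finset.mem_sdiff, Finset.mem_insert, Finset.mem_singleton, not_or] at hq
      obtain ⟨-, hqi, hqj⟩ := hq
      simp [hd, htq q hqi hqj, htq p hpi hpj]
    rw [Finset.sum_congr rfl e3, Finset.sum_const, smul_zero, add_zero]
    have hpiv : p.val ≠ i.val := fun h => hpi (Fin.val_injective h)
    have hpjv : p.val ≠ j.val := fun h => hpj (Fin.val_injective h)
    have hwa := hwne p hpi
    have hwb := hwne' p hpj
    simp only [hd, hti, htj, htq p hpi hpj, Fin.lt_def]
    split_ifs <;> omega
  -- assemble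
  have houter : ∑ p : Fin n, ∑ q : Fin n, d p q =
      -(((univ.filter fun q => i < q ∧ q < j ∧ w q < w i).card : ℤ))
      + (1 + ((univ.filter fun q => i < q ∧ q < j ∧ w q < w j).card : ℤ))
      + ((univ.filter fun k => i < k ∧ k < j ∧ w i < w k ∧ w k < w j).card : ℤ) := by
    rw [sum_split2 _ i j hne, hgi, hgj]
    congr 1
    have e3 : ∀ p ∈ univ \ ({i,j} : Finset (Fin n)), ∑ q : Fin n, d p q =
        (if i < p ∧ p < j ∧ w i < w p ∧ w p < w j then (1:ℤ) else 0) := by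
      intro p hp
      simp only [Finset.mem_sdiff, Finset.mem_insert, Finset.mem_singleton, not_or] at hp
      exact hgp p hp.2.1 hp.2.2
    rw [Finset.sum_congr rfl e3,
      sum_sdiff_to_univ _ i j (by simp) (by simp), card_filter_int]
  -- Nb = Na + M
  have hNab : ((univ.filter fun q => i < q ∧ q < j ∧ w q < w j).card : ℤ) =
      ((univ.filter fun q => i < q ∧ q < j ∧ w q < w i).card : ℤ)
      + ((univ.filter fun k => i < k ∧ k < j ∧ w i < w k ∧ w k < w j).card : ℤ) := by
    rw [card_filter_int, card_filter_int, card_filter_int, ← Finset.sum_add_distrib]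
    apply Finset.sum_congr rfl
    intro q _
    by_cases hqi : q = i
    · subst hqi; simp
    by_cases hqj : q = j
    · subst hqj; simp
    have hwa := hwne q hqi
    have hwb := hwne' q hqj
    simp only [Fin.lt_def]
    split_ifs <;> omega
  have := hdiff
  rw [houter] at this
  omega

lemma circDist_eq{n : ℕ} (a x : Fin n) :
    circDist a x = if a.val ≤ x.val then x.val - a.val else x.val + n - a.val := by
  have hx := x.isLt; have ha := a.isLt
  unfold circDist
  split_ifs with h
  · have e : x.val + n - a.val = n + (x.val - a.val) := by omega
    rw [e, Nat.add_mod_left, Nat.mod_eq_of_lt (by omega)]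
  · rw [Nat.mod_eq_of_lt (by omega)]

theorem qbEdgeA_iff_no_intermediate {n : ℕ} (w : Equiv.Perm (Fin n)) (i j : Fin n)
    (hij : i < j) :
    qbEdgeA w i j ↔
      ¬ ∃ k : Fin n, i < k ∧ k < j ∧
        0 < circDist (w i) (w k) ∧ circDist (w i) (w k) < circDist (w i) (w j) := by
  have hne : i ≠ j := ne_of_lt hij
  have hijv : i.val < j.val := hij
  have hwne : ∀ p : Fin n, p ≠ i → (w p).val ≠ (w i).val := fun p hp h =>
    hp (w.injective (Fin.val_injective h))
  have hwne' : ∀ p : Fin n, p ≠ j → (w p).val ≠ (w j).val := fun p hp h =>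
    hp (w.injective (Fin.val_injective h))
  have hwij : (w i).val ≠ (w j).val := hwne' i hne
  have hcast : ((j : ℤ) - (i : ℤ)) = ((j.val : ℤ) - (i.val : ℤ)) := rfl
  rcases lt_or_gt_of_ne (fun h : w i = w j => hwij (congrArg Fin.val h)) with hab | hba
  · -- case w i < w j : cover edge
    have hkey := key w i j hij hab
    set M := (univ.filter fun k => i < k ∧ k < j ∧ w i < w k ∧ w k < w j).card with hM
    have habv : (w i).val < (w j).val := hab
    have hL : qbEdgeA w i j ↔ M = 0 := by
      unfold qbEdgeA
      constructor
      · rintro (h | h)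
        · have : (invLen (w * Equiv.swap i j) : ℤ) = (invLen w : ℤ) + 1 := by exact_mod_cast h
          omega
        · rw [hcast] at h; omega
      · intro h; left
        have : (invLen (w * Equiv.swap i j) : ℤ) = (invLen w : ℤ) + 1 := by omega
        exact_mod_cast this
    rw [hL]
    constructor
    · intro h
      rintro ⟨k, hik, hkj, hc1, hc2⟩
      have hki : k ≠ i := (ne_of_gt hik)
      have hkj' : k ≠ j := (ne_of_lt hkj)
      have h1 := hwne k hki
      have h2 := hwne' k hkj'
      have hkmem : k ∈ univ.filter fun k => i < k ∧ k < j ∧ w i < w k ∧ w k < w j := by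
        simp only [Finset.mem_filter, Finset.mem_univ, true_and]
        refine ⟨hik, hkj, ?_, ?_⟩ <;> rw [Fin.lt_def] <;>
        · simp only [circDist_eq] at hc1 hc2
          have := (w k).isLt; have := (w i).isLt; have := (w j).isLt
          split_ifs at hc1 hc2 <;> omega
      rw [Finset.card_eq_zero.1 h] at hkmem
      exact absurd hkmem (Finset.notMem_empty k)
    · intro h
      rw [hM, Finset.card_eq_zero, Finset.filter_eq_empty_iff]
      intro k _
      rintro ⟨hik, hkj, hv1, hv2⟩
      apply h
      refine ⟨k, hik, hkj, ?_, ?_⟩ <;>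
      · have h1 := hwne k (ne_of_gt hik)
        have h2 := hwne' k (ne_of_lt hkj)
        have hv1' : (w i).val < (w k).val := hv1
        have hv2' : (w k).val < (w j).val := hv2
        simp only [circDist_eq]
        have := (w k).isLt; have := (w i).isLt; have := (w j).isLt
        split_ifs <;> omega
  · -- case w j < w i : quantum edge
    set t := Equiv.swap i j with ht
    have hw't : (w * t) * t = w := by
      rw [mul_assoc, ht, Equiv.swap_mul_self, mul_one]
    have hw'i : (w * t) i = w j := by rw [Equiv.Perm.mul_apply, ht, Equiv.swap_apply_left]
    have hw'j : (w * t) j = w i := by rw [Equiv.Perm.mul_apply, ht, Equiv.swap_apply_right]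
    have hab' : (w * t) i < (w * t) j := by rw [hw'i, hw'j]; exact hba
    have hkey0 := key (w * t) i j hij hab'
    rw [hw't] at hkey0
    set M := (univ.filter fun k => i < k ∧ k < j ∧ w j < w k ∧ w k < w i).card with hM
    have hfeq : (univ.filter fun k => i < k ∧ k < j ∧ (w*t) i < (w*t) k ∧ (w*t) k < (w*t) j)
        = (univ.filter fun k => i < k ∧ k < j ∧ w j < w k ∧ w k < w i) := by
      apply Finset.filter_congr
      intro k _
      by_cases hki : k = i
      · subst hki; simp [lt_irrefl]
      by_cases hkj : k = j
      · subst hkj; simp [lt_irrefl]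
      have : (w * t) k = w k := by
        rw [Equiv.Perm.mul_apply, ht, Equiv.swap_apply_of_ne_of_ne hki hkj]
      rw [this, hw'i, hw'j]
    rw [hfeq] at hkey0
    have hkey : (invLen w : ℤ) = (invLen (w * t) : ℤ) + 1 + 2 * (M : ℤ) := hkey0
    -- cardinality of the open interval
    have hIoo : (univ.filter fun k : Fin n => i < k ∧ k < j) = Finset.Ioo i j := by
      ext k; simp [Finset.mem_Ioo]
    have hcard : (univ.filter fun k : Fin n => i < k ∧ k < j).card = j.val - i.val - 1 := by
      rw [hIoo]; exact Fin.card_Ioo i j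
    have hsub : (univ.filter fun k => i < k ∧ k < j ∧ w j < w k ∧ w k < w i) ⊆
        (univ.filter fun k : Fin n => i < k ∧ k < j) := by
      intro k hk
      simp only [Finset.mem_filter, Finset.mem_univ, true_and] at hk ⊢
      exact ⟨hk.1, hk.2.1⟩
    have hMle : M ≤ j.val - i.val - 1 := by
      rw [hM, ← hcard]; exact Finset.card_le_card hsub
    have hL : qbEdgeA w i j ↔ M = j.val - i.val - 1 := by
      unfold qbEdgeA
      constructor
      · rintro (h | h)
        · have : (invLen (w * Equiv.swap i j) : ℤ) = (invLen w : ℤ) + 1 := by exact_mod_cast h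
          rw [← ht] at this; omega
        · rw [hcast, ← ht] at h; omega
      · intro h; right
        rw [hcast, ← ht]; omega
    have hAll : (¬ ∃ k : Fin n, i < k ∧ k < j ∧
        0 < circDist (w i) (w k) ∧ circDist (w i) (w k) < circDist (w i) (w j)) ↔
        ∀ k : Fin n, i < k → k < j → w j < w k ∧ w k < w i := by
      have hbav : (w j).val < (w i).val := hba
      constructor
      · intro h k hik hkj
        by_contra hno
        apply h
        refine ⟨k, hik, hkj, ?_, ?_⟩ <;>
        · have h1 := hwne k (ne_of_gt hik)
          have h2 := hwne' k (ne_of_lt hkj)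
          rw [not_and_or, Fin.lt_def, Fin.lt_def, not_lt, not_lt] at hno
          simp only [circDist_eq]
          have := (w k).isLt; have := (w i).isLt; have := (w j).isLt
          split_ifs <;> omega
      · rintro h ⟨k, hik, hkj, hc1, hc2⟩
        obtain ⟨u1, u2⟩ := h k hik hkj
        have u1' : (w j).val < (w k).val := u1
        have u2' : (w k).val < (w i).val := u2
        simp only [circDist_eq] at hc1 hc2
        have := (w k).isLt; have := (w i).isLt; have := (w j).isLt
        split_ifs at hc1 hc2 <;> omega
    rw [hL, hAll]
    constructor
    · intro h
      have heq : (univ.filter fun k => i < k ∧ k < j ∧ w j < w k ∧ w k < w i) =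
          (univ.filter fun k : Fin n => i < k ∧ k < j) :=
        Finset.eq_of_subset_of_card_le hsub (by omega)
      intro k hik hkj
      have : k ∈ univ.filter fun k => i < k ∧ k < j ∧ w j < w k ∧ w k < w i := by
        rw [heq]; simp only [Finset.mem_filter, Finset.mem_univ, true_and]; exact ⟨hik, hkj⟩
      simp only [Finset.mem_filter, Finset.mem_univ, true_and] at this
      exact ⟨this.2.2.1, this.2.2.2⟩
    · intro h
      rw [hM, ← hcard]
      congr 1
      apply Finset.filter_congr
      intro k _
      constructor
      · rintro ⟨h1, h2, -⟩; exact ⟨h1, h2⟩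
      · rintro ⟨h1, h2⟩; exact ⟨h1, h2, h k h1 h2⟩
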